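/- Let f : V → (0,∞) be any positive weight function, m = min_{v∈V} f(v), M = max_{v∈V} f(v), ξ = M/m, and suppose q_v > 0 for all v and θ := min_{v∈V} { q_v f(v) − Σ_{w∈N_v} q_w (λ_w/(1+λ_w)) f(w) } > 0. Then for every initial feasible schedule x and every t ≥ 0, ||μ_{x,t} − π||_var ≤ min{1, (1 − θ/M)^t · nξ}; consequently the mixing time of the parallel Glauber dynamics satisfies T_mix ≤ ⌈(M/θ) log(nξe)⌉. -/

import Mathlib

open Finset

variable {V : Type*} [Fintype V] [DecidableEq V]

/-- A finite set of vertices is independent in `G`. -/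
def IsInd (G : SimpleGraph V) [DecidableRel G.Adj] (s : Finset V) : Prop :=
  ∀ v ∈ s, ∀ w ∈ s, ¬ G.Adj v w

instance (G : SimpleGraph V) [DecidableRel G.Adj] (s : Finset V) :
    Decidable (IsInd G s) := by
  unfold IsInd; infer_instance

/-- `q_v`: probability that vertex `v` belongs to the decision schedule. -/
noncomputable def qVert (q : Finset V → ℝ) (v : V) : ℝ :=
  ∑ m ∈ univ.filter (fun m => v ∈ m), q m

/-- Per-vertex factor of the transition probability of the parallel Glauber
dynamics, given current schedule `σ`, decision schedule `m`, next schedule `σ'`. -/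
noncomputable def stepFactor (G : SimpleGraph V) [DecidableRel G.Adj] (lam : V → ℝ)
    (σ m σ' : Finset V) (v : V) : ℝ :=
  if v ∈ m then
    (if ∃ w ∈ σ, G.Adj v w then (if v ∈ σ' then 0 else 1)
     else (if v ∈ σ' then lam v / (1 + lam v) else 1 / (1 + lam v)))
  else (if (v ∈ σ' ↔ v ∈ σ) then 1 else 0)

/-- Transition matrix of the parallel Glauber dynamics. -/
noncomputable def pgdP (G : SimpleGraph V) [DecidableRel G.Adj] (lam : V → ℝ)
    (q : Finset V → ℝ) (σ σ' : Finset V) : ℝ :=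
  ∑ m : Finset V, q m * ∏ v : V, stepFactor G lam σ m σ' v

/-- Distribution at time `t` of a Markov chain with transition matrix `P`
started at state `x`. -/
noncomputable def chainDist {S : Type*} [Fintype S] [DecidableEq S]
    (P : S → S → ℝ) (x : S) : ℕ → S → ℝ
  | 0 => fun s => if s = x then 1 else 0
  | t + 1 => fun s => ∑ s' : S, chainDist P x t s' * P s' s

/-- `t`-step transition probabilities. -/
noncomputable def chainPow {S : Type*} [Fintype S] [DecidableEq S]
    (P : S → S → ℝ) : ℕ → S → S → ℝ
  | 0 => fun x y => if x = y then 1 else 0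
  | t + 1 => fun x y => ∑ z : S, chainPow P t x z * P z y

/-- Total variation distance between two distributions on a finite set. -/
noncomputable def tvDist {S : Type*} [Fintype S] (μ ν : S → ℝ) : ℝ :=
  (1 / 2) * ∑ s : S, |μ s - ν s|

/-- The product-form distribution on independent sets with fugacities `lam`. -/
noncomputable def prodForm (G : SimpleGraph V) [DecidableRel G.Adj]
    (lam : V → ℝ) (σ : Finset V) : ℝ :=
  if IsInd G σ then
    (∏ v ∈ σ, lam v) / (∑ σ' ∈ univ.filter (fun s => IsInd G s), ∏ v ∈ σ', lam v)
  else 0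

/-- Mixing time: the maximum over starting states in `states` of the first time
the distribution is within `1/e` of `π` in total variation. -/
noncomputable def mixTime {S : Type*} [Fintype S] [DecidableEq S]
    (P : S → S → ℝ) (π : S → ℝ) (states : Finset S) : ℕ :=
  states.sup fun x => sInf {t : ℕ | tvDist (chainDist P x t) π ≤ 1 / Real.exp 1}

variable (G : SimpleGraph V) [DecidableRel G.Adj] (lam : V → ℝ)

lemma sum_prod_ite (a b : V → ℝ) :
    ∑ s : Finset V, ∏ v : V, (if v ∈ s then a v else b v) = ∏ v : V, (a v + b v) := by
  rw [Finset.prod_add, ← Finset.powerset_univ]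
  apply Finset.sum_congr rfl
  intro t ht
  rw [Finset.prod_ite]
  congr 1
  · apply Finset.prod_congr _ (fun _ _ => rfl)
    simp [Finset.filter_mem_eq_inter]
  · apply Finset.prod_congr _ (fun _ _ => rfl)
    ext u; simp

lemma sum_prod_of_mem_dep (F : Finset V → V → ℝ)
    (hF : ∀ v s, F s v = if v ∈ s then F univ v else F ∅ v) :
    ∑ s : Finset V, ∏ v : V, F s v = ∏ v : V, (F univ v + F ∅ v) := by
  rw [← sum_prod_ite]
  exact Finset.sum_congr rfl fun s _ => Finset.prod_congr rfl fun v _ => hF v s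

lemma sum2_prod_of_mem_dep (F : Finset V → Finset V → V → ℝ)
    (hF : ∀ v s t, F s t v = if v ∈ s then (if v ∈ t then F univ univ v else F univ ∅ v)
      else (if v ∈ t then F ∅ univ v else F ∅ ∅ v)) :
    ∑ s : Finset V, ∑ t : Finset V, ∏ v : V, F s t v
      = ∏ v : V, ((F univ univ v + F univ ∅ v) + (F ∅ univ v + F ∅ ∅ v)) := by
  have h1 : ∀ s, ∑ t : Finset V, ∏ v : V, F s t v = ∏ v : V, (F s univ v + F s ∅ v) := by
    intro s
    apply sum_prod_of_mem_dep (fun t v => F s t v)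
    intro v t
    by_cases hs : v ∈ s <;> by_cases htt : v ∈ t <;> simp only [hF v s, hs, htt, if_true, if_false, Finset.mem_univ, Finset.notMem_empty] <;> simp [hs]
  simp_rw [h1]
  apply sum_prod_of_mem_dep (fun s v => F s univ v + F s ∅ v)
  intro v s
  by_cases hs : v ∈ s <;> rw [hF v s univ, hF v s ∅] <;> simp [hs]

variable (G : SimpleGraph V) [DecidableRel G.Adj] (lam : V → ℝ)

/-- per-vertex joint factor of the coupled chain -/
noncomputable def jFactor (σ τ m σ' τ' : Finset V) (v : V) : ℝ :=
  if v ∈ m then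
    if ∃ w ∈ σ, G.Adj v w then
      (if v ∈ σ' then 0 else 1) *
        (if ∃ w ∈ τ, G.Adj v w then (if v ∈ τ' then 0 else 1)
         else (if v ∈ τ' then lam v / (1 + lam v) else 1 / (1 + lam v)))
    else
      if ∃ w ∈ τ, G.Adj v w then
        (if v ∈ τ' then 0 else 1) *
          (if v ∈ σ' then lam v / (1 + lam v) else 1 / (1 + lam v))
      else
        if (v ∈ σ' ↔ v ∈ τ') then (if v ∈ σ' then lam v / (1 + lam v) else 1 / (1 + lam v)) else 0
  else
    (if (v ∈ σ' ↔ v ∈ σ) then 1 else 0) * (if (v ∈ τ' ↔ v ∈ τ) then 1 else 0)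

lemma jFactor_mem_dep (σ τ m : Finset V) (v : V) (σ' τ' : Finset V) :
    jFactor G lam σ τ m σ' τ' v =
      if v ∈ σ' then (if v ∈ τ' then jFactor G lam σ τ m univ univ v else jFactor G lam σ τ m univ ∅ v)
      else (if v ∈ τ' then jFactor G lam σ τ m ∅ univ v else jFactor G lam σ τ m ∅ ∅ v) := by
  by_cases h1 : v ∈ σ' <;> by_cases h2 : v ∈ τ' <;> simp [jFactor, h1, h2]

lemma stepFactor_mem_dep (σ m : Finset V) (v : V) (σ' : Finset V) :
    stepFactor G lam σ m σ' v =
      if v ∈ σ' then stepFactor G lam σ m univ v else stepFactor G lam σ m ∅ v := by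
  by_cases h1 : v ∈ σ' <;> simp [stepFactor, h1]

variable (hlam : ∀ v, 0 < lam v)

lemma lam_frac_sum {c : ℝ} (h : 0 < c) : c / (1 + c) + 1 / (1 + c) = 1 := by
  have h' : (1 : ℝ) + c ≠ 0 := by positivity
  field_simp; ring

lemma lam_frac_sum' {c : ℝ} (h : 0 < c) : c / (1 + c) + (1 + c)⁻¹ = 1 := by
  have h' : (1 : ℝ) + c ≠ 0 := by positivity
  field_simp; ring

include hlam in
lemma stepFactor_sum (σ m : Finset V) (v : V) :
    stepFactor G lam σ m univ v + stepFactor G lam σ m ∅ v = 1 := by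
  simp only [stepFactor, Finset.mem_univ, Finset.notMem_empty]
  by_cases h1 : v ∈ m <;> by_cases h2 : ∃ w ∈ σ, G.Adj v w <;> by_cases h3 : v ∈ σ <;>
    simp [h1, h2, h3, lam_frac_sum (hlam v), lam_frac_sum' (hlam v)]

include hlam in
lemma jFactor_tsum (σ τ m σ' : Finset V) (v : V) :
    jFactor G lam σ τ m σ' univ v + jFactor G lam σ τ m σ' ∅ v
      = stepFactor G lam σ m σ' v := by
  simp only [jFactor, stepFactor, Finset.mem_univ, Finset.notMem_empty]
  by_cases h1 : v ∈ m <;> by_cases h2 : ∃ w ∈ σ, G.Adj v w <;>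
    by_cases h3 : ∃ w ∈ τ, G.Adj v w <;> by_cases h4 : v ∈ σ' <;> by_cases h5 : v ∈ σ <;>
    by_cases h6 : v ∈ τ <;>
    simp [h1, h2, h3, h4, h5, h6, lam_frac_sum (hlam v), lam_frac_sum' (hlam v)]

include hlam in
lemma jFactor_ssum (σ τ m τ' : Finset V) (v : V) :
    jFactor G lam σ τ m univ τ' v + jFactor G lam σ τ m ∅ τ' v
      = stepFactor G lam τ m τ' v := by
  simp only [jFactor, stepFactor, Finset.mem_univ, Finset.notMem_empty]
  by_cases h1 : v ∈ m <;> by_cases h2 : ∃ w ∈ σ, G.Adj v w <;>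
    by_cases h3 : ∃ w ∈ τ, G.Adj v w <;> by_cases h4 : v ∈ τ' <;> by_cases h5 : v ∈ σ <;>
    by_cases h6 : v ∈ τ <;>
    simp [h1, h2, h3, h4, h5, h6, lam_frac_sum (hlam v), lam_frac_sum' (hlam v)]

include hlam in
lemma jFactor_diag (σ τ m : Finset V) (v : V) :
    jFactor G lam σ τ m univ ∅ v + jFactor G lam σ τ m ∅ univ v
      = if v ∈ m then
          (if ((∃ w ∈ σ, G.Adj v w) ↔ (∃ w ∈ τ, G.Adj v w)) then 0 else lam v / (1 + lam v))
        else (if (v ∈ σ ↔ v ∈ τ) then 0 else 1) := by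
  simp only [jFactor, Finset.mem_univ, Finset.notMem_empty]
  by_cases h1 : v ∈ m <;> by_cases h2 : ∃ w ∈ σ, G.Adj v w <;>
    by_cases h3 : ∃ w ∈ τ, G.Adj v w <;> by_cases h5 : v ∈ σ <;> by_cases h6 : v ∈ τ <;>
    simp [h1, h2, h3, h5, h6]

variable (q : Finset V → ℝ)

/-- coupled transition kernel -/
noncomputable def cQ (p p' : Finset V × Finset V) : ℝ :=
  ∑ m : Finset V, q m * ∏ v : V, jFactor G lam p.1 p.2 m p'.1 p'.2 v

/-- weighted Hamming distance -/
noncomputable def wD (f : V → ℝ) (p : Finset V × Finset V) : ℝ :=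
  ∑ v : V, f v * (if (v ∈ p.1 ↔ v ∈ p.2) then 0 else 1)

include hlam in
lemma stepFactor_nonneg (σ m σ' : Finset V) (v : V) :
    0 ≤ stepFactor G lam σ m σ' v := by
  have h := (hlam v).le
  unfold stepFactor
  split_ifs <;> positivity

include hlam in
lemma jFactor_nonneg (σ τ m σ' τ' : Finset V) (v : V) :
    0 ≤ jFactor G lam σ τ m σ' τ' v := by
  have h := (hlam v).le
  unfold jFactor
  split_ifs <;> positivity

include hlam in
lemma pgdP_nonneg (hq0 : ∀ m, 0 ≤ q m) (σ σ' : Finset V) : 0 ≤ pgdP G lam q σ σ' :=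
  Finset.sum_nonneg fun m _ => mul_nonneg (hq0 m)
    (Finset.prod_nonneg fun v _ => stepFactor_nonneg G lam hlam σ m σ' v)

include hlam in
lemma cQ_nonneg (hq0 : ∀ m, 0 ≤ q m) (p p' : Finset V × Finset V) : 0 ≤ cQ G lam q p p' :=
  Finset.sum_nonneg fun m _ => mul_nonneg (hq0 m)
    (Finset.prod_nonneg fun v _ => jFactor_nonneg G lam hlam p.1 p.2 m p'.1 p'.2 v)

include hlam in
lemma pgdP_row_sum (hqsum : ∑ m : Finset V, q m = 1) (σ : Finset V) :
    ∑ σ' : Finset V, pgdP G lam q σ σ' = 1 := by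
  unfold pgdP
  rw [Finset.sum_comm]
  have h : ∀ m : Finset V, ∑ σ' : Finset V, q m * ∏ v : V, stepFactor G lam σ m σ' v = q m := by
    intro m
    rw [← Finset.mul_sum]
    rw [sum_prod_of_mem_dep (fun σ' v => stepFactor G lam σ m σ' v)
      (fun v s => stepFactor_mem_dep G lam σ m v s)]
    rw [Finset.prod_congr rfl (fun v _ => stepFactor_sum G lam hlam σ m v)]
    simp
  rw [Finset.sum_congr rfl (fun m _ => h m), hqsum]

include hlam in
lemma cQ_marg_fst (p : Finset V × Finset V) (σ' : Finset V) :
    ∑ τ' : Finset V, cQ G lam q (p) (σ', τ') = pgdP G lam q p.1 σ' := by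
  unfold cQ pgdP
  rw [Finset.sum_comm]
  apply Finset.sum_congr rfl
  intro m _
  rw [← Finset.mul_sum]
  congr 1
  rw [sum_prod_of_mem_dep (fun τ' v => jFactor G lam p.1 p.2 m σ' τ' v)
    (by intro v t; by_cases h : v ∈ t <;> simp [jFactor, h])]
  exact Finset.prod_congr rfl fun v _ => jFactor_tsum G lam hlam p.1 p.2 m σ' v

include hlam in
lemma cQ_marg_snd (p : Finset V × Finset V) (τ' : Finset V) :
    ∑ σ' : Finset V, cQ G lam q (p) (σ', τ') = pgdP G lam q p.2 τ' := by
  unfold cQ pgdP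
  rw [Finset.sum_comm]
  apply Finset.sum_congr rfl
  intro m _
  rw [← Finset.mul_sum]
  congr 1
  rw [sum_prod_of_mem_dep (fun σ' v => jFactor G lam p.1 p.2 m σ' τ' v)
    (by intro v t; by_cases h : v ∈ t <;> simp [jFactor, h])]
  exact Finset.prod_congr rfl fun v _ => jFactor_ssum G lam hlam p.1 p.2 m τ' v

include hlam in
lemma cQ_wD (hqsum : ∑ m : Finset V, q m = 1) (f : V → ℝ) (p : Finset V × Finset V) :
    ∑ p' : Finset V × Finset V, cQ G lam q p p' * wD f p'
      = ∑ v : V, f v *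
          (qVert q v * (if ((∃ w ∈ p.1, G.Adj v w) ↔ ∃ w ∈ p.2, G.Adj v w) then 0
              else lam v / (1 + lam v))
           + (1 - qVert q v) * (if (v ∈ p.1 ↔ v ∈ p.2) then 0 else 1)) := by
  obtain ⟨σ, τ⟩ := p
  rw [Fintype.sum_prod_type]
  -- expand cQ and wD
  have key : ∀ v0 : V, ∀ m : Finset V,
      ∑ σ' : Finset V, ∑ τ' : Finset V,
        (∏ v : V, jFactor G lam σ τ m σ' τ' v) * (if (v0 ∈ σ' ↔ v0 ∈ τ') then 0 else 1)
      = (if v0 ∈ m then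
          (if ((∃ w ∈ σ, G.Adj v0 w) ↔ ∃ w ∈ τ, G.Adj v0 w) then 0 else lam v0 / (1 + lam v0))
         else (if (v0 ∈ σ ↔ v0 ∈ τ) then 0 else 1)) := by
    intro v0 m
    have hrw : ∀ σ' τ' : Finset V,
        (∏ v : V, jFactor G lam σ τ m σ' τ' v) * (if (v0 ∈ σ' ↔ v0 ∈ τ') then 0 else 1)
        = ∏ v : V, (jFactor G lam σ τ m σ' τ' v *
            (if v = v0 then (if (v ∈ σ' ↔ v ∈ τ') then 0 else 1) else 1)) := by
      intro σ' τ'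
      rw [Finset.prod_mul_distrib]
      congr 1
      rw [Finset.prod_eq_single v0 (by intro b _ hb; simp [hb]) (by simp)]
      simp
    simp_rw [hrw]
    rw [sum2_prod_of_mem_dep (fun σ' τ' v => jFactor G lam σ τ m σ' τ' v *
        (if v = v0 then (if (v ∈ σ' ↔ v ∈ τ') then 0 else 1) else 1))
      (by
        intro v s t
        by_cases h1 : v ∈ s <;> by_cases h2 : v ∈ t <;>
          simp [jFactor_mem_dep G lam σ τ m v s t, h1, h2])]
    rw [Finset.prod_eq_single v0 (by
        intro v _ hv
        simp only [if_neg hv, mul_one, Finset.mem_univ, Finset.notMem_empty]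
        have e1 := jFactor_tsum G lam hlam σ τ m univ v
        have e2 := jFactor_tsum G lam hlam σ τ m ∅ v
        rw [e1, e2]
        exact stepFactor_sum G lam hlam σ m v) (by simp)]
    have hd := jFactor_diag G lam hlam σ τ m v0
    simp only [Finset.mem_univ, Finset.notMem_empty] at hd ⊢
    rw [← hd]
    simp
  -- now compute
  unfold cQ wD
  have e1 : ∀ σ' τ' : Finset V,
      (∑ m : Finset V, q m * ∏ v : V, jFactor G lam σ τ m σ' τ' v) *
        (∑ v0 : V, f v0 * (if (v0 ∈ σ' ↔ v0 ∈ τ') then 0 else 1))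
      = ∑ m : Finset V, ∑ v0 : V, q m * (f v0 *
          ((∏ v : V, jFactor G lam σ τ m σ' τ' v) * (if (v0 ∈ σ' ↔ v0 ∈ τ') then 0 else 1))) := by
    intro σ' τ'
    rw [Finset.sum_mul]
    apply Finset.sum_congr rfl; intro m _
    rw [Finset.mul_sum]
    apply Finset.sum_congr rfl; intro v0 _
    ring
  simp_rw [e1]
  have e2 : ∀ σ' : Finset V, ∑ τ' : Finset V, ∑ m : Finset V, ∑ v0 : V, q m * (f v0 *
          ((∏ v : V, jFactor G lam σ τ m σ' τ' v) * (if (v0 ∈ σ' ↔ v0 ∈ τ') then 0 else 1)))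
      = ∑ m : Finset V, ∑ v0 : V, ∑ τ' : Finset V, q m * (f v0 *
          ((∏ v : V, jFactor G lam σ τ m σ' τ' v) * (if (v0 ∈ σ' ↔ v0 ∈ τ') then 0 else 1))) := by
    intro σ'
    rw [Finset.sum_comm]
    exact Finset.sum_congr rfl fun m _ => Finset.sum_comm
  simp_rw [e2]
  rw [Finset.sum_comm]
  have e3 : ∀ m : Finset V, ∑ σ' : Finset V, ∑ v0 : V, ∑ τ' : Finset V, q m * (f v0 *
          ((∏ v : V, jFactor G lam σ τ m σ' τ' v) * (if (v0 ∈ σ' ↔ v0 ∈ τ') then 0 else 1)))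
      = ∑ v0 : V, q m * (f v0 * (if v0 ∈ m then
          (if ((∃ w ∈ σ, G.Adj v0 w) ↔ ∃ w ∈ τ, G.Adj v0 w) then 0 else lam v0 / (1 + lam v0))
         else (if (v0 ∈ σ ↔ v0 ∈ τ) then 0 else 1))) := by
    intro m
    rw [Finset.sum_comm]
    apply Finset.sum_congr rfl; intro v0 _
    rw [← key v0 m]
    simp_rw [Finset.mul_sum]
  simp_rw [e3]
  rw [Finset.sum_comm]
  apply Finset.sum_congr rfl; intro v0 _
  set A := (if ((∃ w ∈ σ, G.Adj v0 w) ↔ ∃ w ∈ τ, G.Adj v0 w) then (0:ℝ)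
        else lam v0 / (1 + lam v0)) with hA
  set B := (if (v0 ∈ σ ↔ v0 ∈ τ) then (0:ℝ) else 1) with hB
  have e4 : ∀ m : Finset V, q m * (f v0 * (if v0 ∈ m then A else B))
      = f v0 * ((if v0 ∈ m then q m else 0) * A + (if v0 ∈ m then 0 else q m) * B) := by
    intro m; by_cases h : v0 ∈ m <;> simp [h] <;> ring
  simp_rw [e4]
  rw [← Finset.mul_sum]
  congr 1
  rw [Finset.sum_add_distrib, ← Finset.sum_mul, ← Finset.sum_mul]
  congr 2
  · rw [qVert, Finset.sum_filter]
  · have h2 : ∑ m : Finset V, (if v0 ∈ m then (0:ℝ) else q m)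
        = 1 - qVert q v0 := by
      rw [qVert, Finset.sum_filter, ← hqsum]
      rw [← Finset.sum_sub_distrib]
      apply Finset.sum_congr rfl; intro m _
      by_cases h : v0 ∈ m <;> simp [h]
    rw [h2]

lemma nbr_swap (G : SimpleGraph V) [DecidableRel G.Adj] (c e : V → ℝ) :
    ∑ v : V, c v * ∑ w ∈ G.neighborFinset v, e w
      = ∑ w : V, e w * ∑ v ∈ G.neighborFinset w, c v := by
  simp_rw [Finset.mul_sum, SimpleGraph.neighborFinset_eq_filter, Finset.sum_filter]
  rw [Finset.sum_comm]
  apply Finset.sum_congr rfl; intro w _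
  apply Finset.sum_congr rfl; intro v _
  by_cases h : G.Adj v w
  · rw [if_pos h, if_pos h.symm, mul_comm]
  · rw [if_neg h, if_neg (fun h' => h h'.symm)]

include hlam in
lemma cQ_contract (hq0 : ∀ m, 0 ≤ q m) (hqsum : ∑ m : Finset V, q m = 1)
    (f : V → ℝ) (hf : ∀ v, 0 < f v) (M θ : ℝ) (hMf : ∀ v, f v ≤ M) (hMpos : 0 < M)
    (hθpos : 0 < θ)
    (hθle : ∀ v, θ ≤ qVert q v * f v -
      ∑ w ∈ G.neighborFinset v, qVert q w * (lam w / (1 + lam w)) * f w)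
    (p : Finset V × Finset V) :
    ∑ p' : Finset V × Finset V, cQ G lam q p p' * wD f p' ≤ (1 - θ / M) * wD f p := by
  rw [cQ_wD G lam hlam q hqsum f p]
  set d : V → ℝ := fun v => if (v ∈ p.1 ↔ v ∈ p.2) then 0 else 1 with hdd
  have hd0 : ∀ v, 0 ≤ d v := by intro v; rw [hdd]; dsimp only; split_ifs <;> norm_num
  have hd1 : ∀ v, d v ≤ 1 := by intro v; rw [hdd]; dsimp only; split_ifs <;> norm_num
  have hqv0 : ∀ v, 0 ≤ qVert q v := fun v => Finset.sum_nonneg (fun m _ => hq0 m)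
  have hqv1 : ∀ v, qVert q v ≤ 1 := by
    intro v
    rw [← hqsum, qVert]
    exact Finset.sum_le_sum_of_subset_of_nonneg (Finset.filter_subset _ _)
      (fun m _ _ => hq0 m)
  have hlp : ∀ v, 0 ≤ lam v / (1 + lam v) := by
    intro v; have := hlam v; positivity
  have hbeta : ∀ v, (if ((∃ w ∈ p.1, G.Adj v w) ↔ ∃ w ∈ p.2, G.Adj v w) then (0:ℝ)
        else lam v / (1 + lam v))
      ≤ lam v / (1 + lam v) * ∑ w ∈ G.neighborFinset v, d w := by
    intro v
    by_cases h : ((∃ w ∈ p.1, G.Adj v w) ↔ ∃ w ∈ p.2, G.Adj v w)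
    · rw [if_pos h]
      exact mul_nonneg (hlp v) (Finset.sum_nonneg fun w _ => hd0 w)
    · rw [if_neg h]
      have hone : (1:ℝ) ≤ ∑ w ∈ G.neighborFinset v, d w := by
        have : ∃ w0, w0 ∈ G.neighborFinset v ∧ d w0 = 1 := by
          by_cases h1 : ∃ w ∈ p.1, G.Adj v w
          · have h2 : ¬ ∃ w ∈ p.2, G.Adj v w := fun hh => h (iff_of_true h1 hh)
            obtain ⟨w0, hw0m, hw0a⟩ := h1
            refine ⟨w0, by simp [SimpleGraph.mem_neighborFinset, hw0a], ?_⟩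
            have : w0 ∉ p.2 := fun hc => h2 ⟨w0, hc, hw0a⟩
            rw [hdd]; simp [hw0m, this]
          · have h2 : ∃ w ∈ p.2, G.Adj v w := by
              by_contra h2; exact h (iff_of_false h1 h2)
            obtain ⟨w0, hw0m, hw0a⟩ := h2
            refine ⟨w0, by simp [SimpleGraph.mem_neighborFinset, hw0a], ?_⟩
            have : w0 ∉ p.1 := fun hc => h1 ⟨w0, hc, hw0a⟩
            rw [hdd]; simp [hw0m, this]
        obtain ⟨w0, hw0, hdw0⟩ := this
        calc (1:ℝ) = d w0 := hdw0.symm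
          _ ≤ ∑ w ∈ G.neighborFinset v, d w :=
            Finset.single_le_sum (fun w _ => hd0 w) hw0
      calc lam v / (1 + lam v) = lam v / (1 + lam v) * 1 := by ring
        _ ≤ lam v / (1 + lam v) * ∑ w ∈ G.neighborFinset v, d w :=
            mul_le_mul_of_nonneg_left hone (hlp v)
  have step1 : ∑ v : V, f v *
        (qVert q v * (if ((∃ w ∈ p.1, G.Adj v w) ↔ ∃ w ∈ p.2, G.Adj v w) then 0
            else lam v / (1 + lam v))
         + (1 - qVert q v) * d v)
      ≤ ∑ v : V, ((f v * qVert q v * (lam v / (1 + lam v))) * ∑ w ∈ G.neighborFinset v, d w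
          + f v * (1 - qVert q v) * d v) := by
    apply Finset.sum_le_sum
    intro v _
    have h1 : f v * qVert q v *
        (if ((∃ w ∈ p.1, G.Adj v w) ↔ ∃ w ∈ p.2, G.Adj v w) then (0:ℝ)
            else lam v / (1 + lam v))
        ≤ f v * qVert q v * (lam v / (1 + lam v) * ∑ w ∈ G.neighborFinset v, d w) :=
      mul_le_mul_of_nonneg_left (hbeta v) (mul_nonneg (hf v).le (hqv0 v))
    nlinarith [h1]
  have step2 : ∑ v : V, ((f v * qVert q v * (lam v / (1 + lam v))) * ∑ w ∈ G.neighborFinset v, d w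
          + f v * (1 - qVert q v) * d v)
      = ∑ v : V, d v * (f v - (qVert q v * f v -
          ∑ w ∈ G.neighborFinset v, qVert q w * (lam w / (1 + lam w)) * f w)) := by
    rw [Finset.sum_add_distrib]
    rw [nbr_swap G (fun v => f v * qVert q v * (lam v / (1 + lam v))) d]
    rw [← Finset.sum_add_distrib]
    apply Finset.sum_congr rfl; intro v _
    rw [Finset.mul_sum]
    have : ∀ w ∈ G.neighborFinset v, d v * (f w * qVert q w * (lam w / (1 + lam w)))
        = d v * (qVert q w * (lam w / (1 + lam w)) * f w) := by intros; ring
    rw [Finset.sum_congr rfl this, ← Finset.mul_sum]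
    ring
  have step3 : ∑ v : V, d v * (f v - (qVert q v * f v -
          ∑ w ∈ G.neighborFinset v, qVert q w * (lam w / (1 + lam w)) * f w))
      ≤ ∑ v : V, d v * (f v - θ) := by
    apply Finset.sum_le_sum
    intro v _
    apply mul_le_mul_of_nonneg_left _ (hd0 v)
    have := hθle v
    linarith
  have step4 : ∑ v : V, d v * (f v - θ) ≤ (1 - θ / M) * wD f p := by
    have hwd : wD f p = ∑ v : V, f v * d v := rfl
    have hsum : wD f p ≤ M * ∑ v : V, d v := by
      rw [hwd, Finset.mul_sum]
      apply Finset.sum_le_sum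
      intro v _
      exact mul_le_mul_of_nonneg_right (hMf v) (hd0 v)
    have : ∑ v : V, d v * (f v - θ) = wD f p - θ * ∑ v : V, d v := by
      rw [hwd, Finset.mul_sum, ← Finset.sum_sub_distrib]
      apply Finset.sum_congr rfl; intro v _; ring
    rw [this]
    have h5 : θ / M * wD f p ≤ θ * ∑ v : V, d v := by
      rw [div_mul_eq_mul_div, div_le_iff₀ hMpos]
      calc θ * wD f p ≤ θ * (M * ∑ v : V, d v) :=
            mul_le_mul_of_nonneg_left hsum hθpos.le
        _ = θ * (∑ v : V, d v) * M := by ring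
    linarith
  calc _ ≤ _ := step1
    _ = _ := step2
    _ ≤ _ := step3
    _ ≤ _ := step4

lemma blk_agree (m σ σ' : Finset V) (hm : IsInd G m)
    (hagree : ∀ w, w ∉ m → (w ∈ σ ↔ w ∈ σ')) (v : V) (hv : v ∈ m) :
    (∃ w ∈ σ, G.Adj v w) ↔ (∃ w ∈ σ', G.Adj v w) := by
  constructor
  · rintro ⟨w, hw, ha⟩
    have hwm : w ∉ m := fun hc => hm v hv w hc ha
    exact ⟨w, (hagree w hwm).mp hw, ha⟩
  · rintro ⟨w, hw, ha⟩
    have hwm : w ∉ m := fun hc => hm v hv w hc ha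
    exact ⟨w, (hagree w hwm).mpr hw, ha⟩

include hlam in
lemma db_vertex (m σ σ' : Finset V) (hσ : IsInd G σ) (hσ' : IsInd G σ') (hm : IsInd G m)
    (hagree : ∀ w, w ∉ m → (w ∈ σ ↔ w ∈ σ')) (v : V) :
    (if v ∈ σ then lam v else 1) * stepFactor G lam σ m σ' v
      = (if v ∈ σ' then lam v else 1) * stepFactor G lam σ' m σ v := by
  have hne : (1 : ℝ) + lam v ≠ 0 := by have := hlam v; positivity
  by_cases hv : v ∈ m
  · have hb := blk_agree G m σ σ' hm hagree v hv
    by_cases h2 : ∃ w ∈ σ, G.Adj v w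
    · have h2' : ∃ w ∈ σ', G.Adj v w := hb.mp h2
      have hvσ : v ∉ σ := fun hc => by obtain ⟨w, hw, ha⟩ := h2; exact hσ v hc w hw ha
      have hvσ' : v ∉ σ' := fun hc => by obtain ⟨w, hw, ha⟩ := h2'; exact hσ' v hc w hw ha
      simp [stepFactor, hv, h2, h2', hvσ, hvσ']
    · have h2' : ¬ ∃ w ∈ σ', G.Adj v w := fun hh => h2 (hb.mpr hh)
      by_cases h3 : v ∈ σ <;> by_cases h4 : v ∈ σ' <;>
        simp [stepFactor, hv, h2, h2', h3, h4] <;> field_simp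
  · by_cases h3 : v ∈ σ <;> by_cases h4 : v ∈ σ' <;>
      simp [stepFactor, hv, h3, h4] <;> tauto

include hlam in
lemma isInd_image (m σ σ' : Finset V) (hσ : IsInd G σ) (hm : IsInd G m)
    (hne : (∏ v : V, stepFactor G lam σ m σ' v) ≠ 0) : IsInd G σ' := by
  have hfac : ∀ v, stepFactor G lam σ m σ' v ≠ 0 := by
    intro v h0
    exact hne (Finset.prod_eq_zero (Finset.mem_univ v) h0)
  have hoff : ∀ v, v ∉ m → (v ∈ σ' ↔ v ∈ σ) := by
    intro v hv
    by_contra hc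
    exact hfac v (by simp [stepFactor, hv, hc])
  have hblk : ∀ v ∈ m, (∃ w ∈ σ, G.Adj v w) → v ∉ σ' := by
    intro v hv hb hc
    exact hfac v (by simp [stepFactor, hv, hb, hc])
  intro u hu w hw hadj
  by_cases hum : u ∈ m <;> by_cases hwm : w ∈ m
  · exact hm u hum w hwm hadj
  · have hwσ : w ∈ σ := (hoff w hwm).mp hw
    exact hblk u hum ⟨w, hwσ, hadj⟩ hu
  · have huσ : u ∈ σ := (hoff u hum).mp hu
    exact hblk w hwm ⟨u, huσ, hadj.symm⟩ hw
  · have huσ : u ∈ σ := (hoff u hum).mp hu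
    have hwσ : w ∈ σ := (hoff w hwm).mp hw
    exact hσ u huσ w hwσ hadj

lemma prod_lam_ite (lam : V → ℝ) (σ : Finset V) :
    ∏ v ∈ σ, lam v = ∏ v : V, (if v ∈ σ then lam v else 1) := by
  calc ∏ v ∈ σ, lam v = ∏ v ∈ σ, (if v ∈ σ then lam v else 1) :=
        Finset.prod_congr rfl (fun v hv => by rw [if_pos hv])
    _ = ∏ v : V, (if v ∈ σ then lam v else 1) :=
        Finset.prod_subset (Finset.subset_univ σ) (fun x _ hx => if_neg hx)

include hlam in
lemma db_prod (m σ σ' : Finset V) (hσ : IsInd G σ) (hσ' : IsInd G σ') (hm : IsInd G m) :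
    (∏ v ∈ σ, lam v) * ∏ v : V, stepFactor G lam σ m σ' v
      = (∏ v ∈ σ', lam v) * ∏ v : V, stepFactor G lam σ' m σ v := by
  by_cases hagree : ∀ w, w ∉ m → (w ∈ σ ↔ w ∈ σ')
  · rw [prod_lam_ite lam σ, prod_lam_ite lam σ', ← Finset.prod_mul_distrib,
      ← Finset.prod_mul_distrib]
    exact Finset.prod_congr rfl fun v _ => db_vertex G lam hlam m σ σ' hσ hσ' hm hagree v
  · push_neg at hagree
    obtain ⟨v0, hv0m, hv0⟩ := hagree
    have hnif : ¬ (v0 ∈ σ' ↔ v0 ∈ σ) := by tauto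
    have hnif2 : ¬ (v0 ∈ σ ↔ v0 ∈ σ') := by tauto
    have hz1 : stepFactor G lam σ m σ' v0 = 0 := by
      simp only [stepFactor, if_neg hv0m]
      rw [if_neg hnif]
    have hz2 : stepFactor G lam σ' m σ v0 = 0 := by
      simp only [stepFactor, if_neg hv0m]
      rw [if_neg hnif2]
    rw [Finset.prod_eq_zero (Finset.mem_univ v0) hz1,
      Finset.prod_eq_zero (Finset.mem_univ v0) hz2]
    ring

include hlam in
lemma Z_pos : 0 < ∑ σ' ∈ univ.filter (fun s => IsInd G s), ∏ v ∈ σ', lam v := by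
  apply Finset.sum_pos
  · intro σ' _
    exact Finset.prod_pos fun v _ => hlam v
  · refine ⟨∅, ?_⟩
    exact Finset.mem_filter.mpr ⟨Finset.mem_univ _, by simp [IsInd]⟩

include hlam in
lemma prodForm_nonneg (σ : Finset V) : 0 ≤ prodForm G lam σ := by
  unfold prodForm
  split_ifs
  · apply div_nonneg (Finset.prod_nonneg fun v _ => (hlam v).le) (Z_pos G lam hlam).le
  · exact le_refl 0

include hlam in
lemma prodForm_sum : ∑ σ : Finset V, prodForm G lam σ = 1 := by
  unfold prodForm
  rw [Finset.sum_ite, Finset.sum_const_zero, add_zero, ← Finset.sum_div]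
  exact div_self (Z_pos G lam hlam).ne'

include hlam in
lemma prodForm_stationary (hq0 : ∀ m, 0 ≤ q m) (hqsupp : ∀ m, ¬ IsInd G m → q m = 0)
    (hqsum : ∑ m : Finset V, q m = 1) (σ' : Finset V) :
    ∑ σ : Finset V, prodForm G lam σ * pgdP G lam q σ σ' = prodForm G lam σ' := by
  have key : ∀ σ : Finset V, prodForm G lam σ * pgdP G lam q σ σ'
      = prodForm G lam σ' * pgdP G lam q σ' σ := by
    intro σ
    unfold pgdP
    rw [Finset.mul_sum, Finset.mul_sum]
    apply Finset.sum_congr rfl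
    intro mm _
    by_cases hqm : q mm = 0
    · rw [hqm]; ring
    have hmInd : IsInd G mm := by by_contra hc; exact hqm (hqsupp mm hc)
    by_cases hσ : IsInd G σ
    · by_cases hσ' : IsInd G σ'
      · have hdb := db_prod G lam hlam mm σ σ' hσ hσ' hmInd
        unfold prodForm
        rw [if_pos hσ, if_pos hσ']
        have hZ := (Z_pos G lam hlam).ne'
        field_simp
        linear_combination hdb
      · have hz : (∏ v : V, stepFactor G lam σ mm σ' v) = 0 := by
          by_contra hc
          exact hσ' (isInd_image G lam hlam mm σ σ' hσ hmInd hc)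
        unfold prodForm
        rw [if_neg hσ', hz]
        ring
    · by_cases hσ' : IsInd G σ'
      · have hz : (∏ v : V, stepFactor G lam σ' mm σ v) = 0 := by
          by_contra hc
          exact hσ (isInd_image G lam hlam mm σ' σ hσ' hmInd hc)
        unfold prodForm
        rw [if_neg hσ, hz]
        ring
      · unfold prodForm
        rw [if_neg hσ, if_neg hσ']
        ring
  rw [Finset.sum_congr rfl fun σ _ => key σ, ← Finset.mul_sum,
    pgdP_row_sum G lam hlam q hqsum σ', mul_one]

noncomputable def nuC (x : Finset V) : ℕ → (Finset V × Finset V) → ℝ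
  | 0 => fun p => (if p.1 = x then 1 else 0) * prodForm G lam p.2
  | t + 1 => fun p => ∑ p' : Finset V × Finset V, nuC x t p' * cQ G lam q p' p

include hlam in
lemma nuC_nonneg (hq0 : ∀ m, 0 ≤ q m) (x : Finset V) :
    ∀ t p, 0 ≤ nuC G lam q x t p := by
  intro t
  induction t with
  | zero =>
    intro p
    exact mul_nonneg (by positivity) (prodForm_nonneg G lam hlam p.2)
  | succ t ih =>
    intro p
    exact Finset.sum_nonneg fun p' _ =>
      mul_nonneg (ih p') (cQ_nonneg G lam hlam q hq0 p' p)

include hlam in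
lemma nuC_marg_fst (hq0 : ∀ m, 0 ≤ q m) (hqsum : ∑ m : Finset V, q m = 1) (x : Finset V) :
    ∀ t σ', ∑ τ' : Finset V, nuC G lam q x t (σ', τ') = chainDist (pgdP G lam q) x t σ' := by
  intro t
  induction t with
  | zero =>
    intro σ'
    show ∑ τ' : Finset V, (if σ' = x then (1:ℝ) else 0) * prodForm G lam τ' = _
    rw [← Finset.mul_sum, prodForm_sum G lam hlam, mul_one]
    rfl
  | succ t ih =>
    intro σ'
    show ∑ τ' : Finset V, ∑ p' : Finset V × Finset V,
        nuC G lam q x t p' * cQ G lam q p' (σ', τ') = _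
    rw [Finset.sum_comm]
    have e1 : ∀ p' : Finset V × Finset V,
        ∑ τ' : Finset V, nuC G lam q x t p' * cQ G lam q p' (σ', τ')
        = nuC G lam q x t p' * pgdP G lam q p'.1 σ' := by
      intro p'
      rw [← Finset.mul_sum, cQ_marg_fst G lam hlam q p' σ']
    rw [Finset.sum_congr rfl fun p' _ => e1 p']
    rw [Fintype.sum_prod_type]
    show ∑ σ'' : Finset V, ∑ τ'' : Finset V,
        nuC G lam q x t (σ'', τ'') * pgdP G lam q σ'' σ' = _
    have e2 : ∀ σ'' : Finset V, ∑ τ'' : Finset V,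
        nuC G lam q x t (σ'', τ'') * pgdP G lam q σ'' σ'
        = chainDist (pgdP G lam q) x t σ'' * pgdP G lam q σ'' σ' := by
      intro σ''
      rw [← Finset.sum_mul, ih σ'']
    rw [Finset.sum_congr rfl fun σ'' _ => e2 σ'']
    rfl

include hlam in
lemma nuC_marg_snd (hq0 : ∀ m, 0 ≤ q m) (hqsupp : ∀ m, ¬ IsInd G m → q m = 0)
    (hqsum : ∑ m : Finset V, q m = 1) (x : Finset V) :
    ∀ t τ', ∑ σ' : Finset V, nuC G lam q x t (σ', τ') = prodForm G lam τ' := by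
  intro t
  induction t with
  | zero =>
    intro τ'
    show ∑ σ' : Finset V, (if σ' = x then (1:ℝ) else 0) * prodForm G lam τ' = _
    rw [← Finset.sum_mul]
    simp
  | succ t ih =>
    intro τ'
    show ∑ σ' : Finset V, ∑ p' : Finset V × Finset V,
        nuC G lam q x t p' * cQ G lam q p' (σ', τ') = _
    rw [Finset.sum_comm]
    have e1 : ∀ p' : Finset V × Finset V,
        ∑ σ' : Finset V, nuC G lam q x t p' * cQ G lam q p' (σ', τ')
        = nuC G lam q x t p' * pgdP G lam q p'.2 τ' := by
      intro p'
      rw [← Finset.mul_sum, cQ_marg_snd G lam hlam q p' τ']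
    rw [Finset.sum_congr rfl fun p' _ => e1 p']
    rw [Fintype.sum_prod_type_right]
    show ∑ τ'' : Finset V, ∑ σ'' : Finset V,
        nuC G lam q x t (σ'', τ'') * pgdP G lam q τ'' τ' = _
    have e2 : ∀ τ'' : Finset V, ∑ σ'' : Finset V,
        nuC G lam q x t (σ'', τ'') * pgdP G lam q τ'' τ'
        = prodForm G lam τ'' * pgdP G lam q τ'' τ' := by
      intro τ''
      rw [← Finset.sum_mul, ih τ'']
    rw [Finset.sum_congr rfl fun τ'' _ => e2 τ'']
    exact prodForm_stationary G lam hlam q hq0 hqsupp hqsum τ'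

include hlam in
lemma nuC_wD (hq0 : ∀ m, 0 ≤ q m) (hqsum : ∑ m : Finset V, q m = 1)
    (f : V → ℝ) (hf : ∀ v, 0 < f v) (M θ : ℝ) (hMf : ∀ v, f v ≤ M) (hMpos : 0 < M)
    (hθpos : 0 < θ) (hθM : θ ≤ M)
    (hθle : ∀ v, θ ≤ qVert q v * f v -
      ∑ w ∈ G.neighborFinset v, qVert q w * (lam w / (1 + lam w)) * f w)
    (x : Finset V) :
    ∀ t, ∑ p : Finset V × Finset V, nuC G lam q x t p * wD f p
      ≤ (1 - θ / M) ^ t * ((Fintype.card V : ℝ) * M) := by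
  have hc0 : 0 ≤ 1 - θ / M := by
    have : θ / M ≤ 1 := (div_le_one hMpos).mpr hθM
    linarith
  have hwD_nonneg : ∀ p : Finset V × Finset V, 0 ≤ wD f p := by
    intro p
    apply Finset.sum_nonneg
    intro v _
    have := (hf v).le
    split_ifs <;> simp <;> positivity
  have hwD_le : ∀ p : Finset V × Finset V, wD f p ≤ (Fintype.card V : ℝ) * M := by
    intro p
    unfold wD
    calc ∑ v : V, f v * (if (v ∈ p.1 ↔ v ∈ p.2) then (0:ℝ) else 1)
        ≤ ∑ v : V, M := by
          apply Finset.sum_le_sum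
          intro v _
          have h1 := hf v
          have h2 := hMf v
          split_ifs <;> simp <;> linarith
      _ = (Fintype.card V : ℝ) * M := by
          rw [Finset.sum_const, Finset.card_univ, nsmul_eq_mul]
  intro t
  induction t with
  | zero =>
    show ∑ p : Finset V × Finset V, ((if p.1 = x then (1:ℝ) else 0) * prodForm G lam p.2) * wD f p ≤ _
    rw [pow_zero, one_mul]
    calc ∑ p : Finset V × Finset V, ((if p.1 = x then (1:ℝ) else 0) * prodForm G lam p.2) * wD f p
        ≤ ∑ p : Finset V × Finset V, ((if p.1 = x then (1:ℝ) else 0) * prodForm G lam p.2) *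
            ((Fintype.card V : ℝ) * M) := by
          apply Finset.sum_le_sum
          intro p _
          exact mul_le_mul_of_nonneg_left (hwD_le p)
            (mul_nonneg (by positivity) (prodForm_nonneg G lam hlam p.2))
      _ = ((Fintype.card V : ℝ) * M) * ∑ p : Finset V × Finset V,
            ((if p.1 = x then (1:ℝ) else 0) * prodForm G lam p.2) := by
          rw [Finset.mul_sum]
          apply Finset.sum_congr rfl; intros; ring
      _ ≤ (Fintype.card V : ℝ) * M := by
          have : ∑ p : Finset V × Finset V, ((if p.1 = x then (1:ℝ) else 0) * prodForm G lam p.2) = 1 := by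
            rw [Fintype.sum_prod_type]
            have : ∀ σ' : Finset V, ∑ τ' : Finset V,
                ((if σ' = x then (1:ℝ) else 0) * prodForm G lam τ') = (if σ' = x then (1:ℝ) else 0) := by
              intro σ'
              rw [← Finset.mul_sum, prodForm_sum G lam hlam, mul_one]
            rw [Finset.sum_congr rfl fun σ' _ => this σ']
            simp
          rw [this, mul_one]
  | succ t ih =>
    show ∑ p : Finset V × Finset V, (∑ p' : Finset V × Finset V,
        nuC G lam q x t p' * cQ G lam q p' p) * wD f p ≤ _
    have e1 : ∑ p : Finset V × Finset V, (∑ p' : Finset V × Finset V,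
        nuC G lam q x t p' * cQ G lam q p' p) * wD f p
        = ∑ p' : Finset V × Finset V, nuC G lam q x t p' *
            ∑ p : Finset V × Finset V, cQ G lam q p' p * wD f p := by
      simp_rw [Finset.sum_mul]
      rw [Finset.sum_comm]
      apply Finset.sum_congr rfl; intro p' _
      rw [Finset.mul_sum]
      apply Finset.sum_congr rfl; intro p _
      ring
    rw [e1]
    calc ∑ p' : Finset V × Finset V, nuC G lam q x t p' *
            ∑ p : Finset V × Finset V, cQ G lam q p' p * wD f p
        ≤ ∑ p' : Finset V × Finset V, nuC G lam q x t p' * ((1 - θ / M) * wD f p') := by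
          apply Finset.sum_le_sum
          intro p' _
          exact mul_le_mul_of_nonneg_left
            (cQ_contract G lam hlam q hq0 hqsum f hf M θ hMf hMpos hθpos hθle p')
            (nuC_nonneg G lam hlam q hq0 x t p')
      _ = (1 - θ / M) * ∑ p' : Finset V × Finset V, nuC G lam q x t p' * wD f p' := by
          rw [Finset.mul_sum]
          apply Finset.sum_congr rfl; intros; ring
      _ ≤ (1 - θ / M) * ((1 - θ / M) ^ t * ((Fintype.card V : ℝ) * M)) :=
          mul_le_mul_of_nonneg_left ih hc0
      _ = (1 - θ / M) ^ (t + 1) * ((Fintype.card V : ℝ) * M) := by ring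

include hlam in
lemma tv_bound (hq0 : ∀ m, 0 ≤ q m) (hqsupp : ∀ m, ¬ IsInd G m → q m = 0)
    (hqsum : ∑ m : Finset V, q m = 1)
    (f : V → ℝ) (hf : ∀ v, 0 < f v) (mm M θ : ℝ)
    (hmm : ∀ v, mm ≤ f v) (hmmpos : 0 < mm)
    (hMf : ∀ v, f v ≤ M) (hMpos : 0 < M) (hθpos : 0 < θ) (hθM : θ ≤ M)
    (hθle : ∀ v, θ ≤ qVert q v * f v -
      ∑ w ∈ G.neighborFinset v, qVert q w * (lam w / (1 + lam w)) * f w)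
    (x : Finset V) (t : ℕ) :
    tvDist (chainDist (pgdP G lam q) x t) (prodForm G lam)
      ≤ (1 - θ / M) ^ t * ((Fintype.card V : ℝ) * (M / mm)) := by
  set ν := nuC G lam q x t with hνdef
  have hν : ∀ p, 0 ≤ ν p := nuC_nonneg G lam hlam q hq0 x t
  have hμ : ∀ s, chainDist (pgdP G lam q) x t s = ∑ τ' : Finset V, ν (s, τ') :=
    fun s => (nuC_marg_fst G lam hlam q hq0 hqsum x t s).symm
  have hπ : ∀ s, prodForm G lam s = ∑ σ' : Finset V, ν (σ', s) :=
    fun s => (nuC_marg_snd G lam hlam q hq0 hqsupp hqsum x t s).symm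
  have step1 : tvDist (chainDist (pgdP G lam q) x t) (prodForm G lam)
      ≤ ∑ p : Finset V × Finset V, ν p * (if p.1 = p.2 then 0 else 1) := by
    unfold tvDist
    have habs : ∀ s : Finset V, |chainDist (pgdP G lam q) x t s - prodForm G lam s|
        ≤ (∑ τ' : Finset V, ν (s, τ') - ν (s, s)) + (∑ σ' : Finset V, ν (σ', s) - ν (s, s)) := by
      intro s
      have hA : ν (s, s) ≤ ∑ τ' : Finset V, ν (s, τ') :=
        Finset.single_le_sum (fun τ' _ => hν (s, τ')) (Finset.mem_univ s)
      have hB : ν (s, s) ≤ ∑ σ' : Finset V, ν (σ', s) :=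
        Finset.single_le_sum (fun σ' _ => hν (σ', s)) (Finset.mem_univ s)
      rw [hμ s, hπ s]
      rw [abs_le]
      constructor <;> linarith
    calc (1/2 : ℝ) * ∑ s : Finset V, |chainDist (pgdP G lam q) x t s - prodForm G lam s|
        ≤ (1/2 : ℝ) * ∑ s : Finset V,
            ((∑ τ' : Finset V, ν (s, τ') - ν (s, s)) + (∑ σ' : Finset V, ν (σ', s) - ν (s, s))) := by
          apply mul_le_mul_of_nonneg_left (Finset.sum_le_sum fun s _ => habs s) (by norm_num)
      _ = ∑ p : Finset V × Finset V, ν p - ∑ s : Finset V, ν (s, s) := by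
          rw [Finset.sum_add_distrib, Finset.sum_sub_distrib, Finset.sum_sub_distrib]
          rw [← Fintype.sum_prod_type, ← Fintype.sum_prod_type_right]
          ring
      _ = ∑ p : Finset V × Finset V, ν p * (if p.1 = p.2 then 0 else 1) := by
          have hdiag : ∑ s : Finset V, ν (s, s)
              = ∑ p : Finset V × Finset V, (if p.1 = p.2 then ν p else 0) := by
            rw [Fintype.sum_prod_type]
            apply Finset.sum_congr rfl; intro s _
            rw [Finset.sum_ite_eq (univ : Finset (Finset V)) s (fun τ' => ν (s, τ'))]
            simp
          rw [hdiag, ← Finset.sum_sub_distrib]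
          apply Finset.sum_congr rfl; intro p _
          by_cases h : p.1 = p.2 <;> simp [h]
  have step2 : ∑ p : Finset V × Finset V, ν p * (if p.1 = p.2 then 0 else 1)
      ≤ (1 / mm) * ∑ p : Finset V × Finset V, ν p * wD f p := by
    rw [Finset.mul_sum]
    apply Finset.sum_le_sum
    intro p _
    by_cases h : p.1 = p.2
    · rw [if_pos h, mul_zero]
      have h2 : 0 ≤ wD f p := by
        apply Finset.sum_nonneg; intro v _
        have := (hf v).le
        split_ifs <;> simp <;> positivity
      exact mul_nonneg (by positivity) (mul_nonneg (hν p) h2)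
    · rw [if_neg h, mul_one]
      have hv0 : ∃ v0 : V, ¬ (v0 ∈ p.1 ↔ v0 ∈ p.2) := by
        by_contra hc
        push_neg at hc
        exact h (Finset.ext fun v => hc v)
      obtain ⟨v0, hv0⟩ := hv0
      have hwd : mm ≤ wD f p := by
        calc mm ≤ f v0 := hmm v0
          _ = f v0 * (if (v0 ∈ p.1 ↔ v0 ∈ p.2) then (0:ℝ) else 1) := by rw [if_neg hv0]; ring
          _ ≤ ∑ v : V, f v * (if (v ∈ p.1 ↔ v ∈ p.2) then (0:ℝ) else 1) := by
              apply Finset.single_le_sum _ (Finset.mem_univ v0)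
              intro v _
              have := (hf v).le
              split_ifs <;> simp <;> positivity
      calc ν p = ν p * (mm * (1/mm)) := by
            rw [mul_one_div, div_self hmmpos.ne', mul_one]
        _ ≤ ν p * (wD f p * (1/mm)) := by
            apply mul_le_mul_of_nonneg_left _ (hν p)
            apply mul_le_mul_of_nonneg_right hwd (by positivity)
        _ = 1 / mm * (ν p * wD f p) := by ring
  have step3 := nuC_wD G lam hlam q hq0 hqsum f hf M θ hMf hMpos hθpos hθM hθle x t
  calc tvDist (chainDist (pgdP G lam q) x t) (prodForm G lam)
      ≤ (1 / mm) * ∑ p : Finset V × Finset V, ν p * wD f p := le_trans step1 step2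
    _ ≤ (1 / mm) * ((1 - θ / M) ^ t * ((Fintype.card V : ℝ) * M)) := by
        apply mul_le_mul_of_nonneg_left step3 (by positivity)
    _ = (1 - θ / M) ^ t * ((Fintype.card V : ℝ) * (M / mm)) := by
        rw [div_eq_mul_inv M mm, div_eq_mul_inv 1 mm]
        ring

lemma chainDist_nonneg {S : Type*} [Fintype S] [DecidableEq S] (P : S → S → ℝ)
    (hP : ∀ a b, 0 ≤ P a b) (x : S) : ∀ t s, 0 ≤ chainDist P x t s := by
  intro t
  induction t with
  | zero => intro s; dsimp [chainDist]; split_ifs <;> norm_num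
  | succ t ih => intro s; exact Finset.sum_nonneg fun s' _ => mul_nonneg (ih s') (hP s' s)

lemma chainDist_sum {S : Type*} [Fintype S] [DecidableEq S] (P : S → S → ℝ)
    (hrow : ∀ a, ∑ b : S, P a b = 1) (x : S) : ∀ t, ∑ s : S, chainDist P x t s = 1 := by
  intro t
  induction t with
  | zero => simp [chainDist]
  | succ t ih =>
    show ∑ s : S, ∑ s' : S, chainDist P x t s' * P s' s = 1
    rw [Finset.sum_comm]
    calc ∑ s' : S, ∑ s : S, chainDist P x t s' * P s' s
        = ∑ s' : S, chainDist P x t s' := by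
          apply Finset.sum_congr rfl; intro s' _
          rw [← Finset.mul_sum, hrow s', mul_one]
      _ = 1 := ih

lemma tvDist_le_one {S : Type*} [Fintype S] (μ ν : S → ℝ)
    (hμ0 : ∀ s, 0 ≤ μ s) (hν0 : ∀ s, 0 ≤ ν s)
    (hμ1 : ∑ s : S, μ s = 1) (hν1 : ∑ s : S, ν s = 1) : tvDist μ ν ≤ 1 := by
  unfold tvDist
  have : ∑ s : S, |μ s - ν s| ≤ ∑ s : S, (μ s + ν s) := by
    apply Finset.sum_le_sum
    intro s _
    rw [abs_le]
    constructor <;> [linarith [hμ0 s, hν0 s]; linarith [hμ0 s, hν0 s]]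
  rw [Finset.sum_add_distrib, hμ1, hν1] at this
  linarith

lemma final_num (c A : ℝ) (N : ℕ) (hc0 : 0 < c) (hc1 : c ≤ 1) (hA : 1 ≤ A)
    (hN : Real.log (A * Real.exp 1) / c ≤ (N : ℝ)) :
    (1 - c) ^ N * A ≤ 1 / Real.exp 1 := by
  have hApos : 0 < A := lt_of_lt_of_le one_pos hA
  have h1 : (1 - c : ℝ) ≤ Real.exp (-c) := by
    have := Real.add_one_le_exp (-c)
    linarith
  have h2 : (1 - c) ^ N ≤ Real.exp (-c) ^ N :=
    pow_le_pow_left₀ (by linarith) h1 N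
  have h3 : Real.exp (-c) ^ N = Real.exp (-(c * N)) := by
    rw [← Real.exp_nat_mul]
    congr 1
    ring
  have hlog : Real.log (A * Real.exp 1) = Real.log A + 1 := by
    rw [Real.log_mul hApos.ne' (Real.exp_ne_zero 1), Real.log_exp]
  have h4 : Real.log A + 1 ≤ c * N := by
    have := (div_le_iff₀ hc0).mp hN
    rw [hlog] at this
    linarith [this]
  calc (1 - c) ^ N * A ≤ Real.exp (-(c * N)) * A := by
        apply mul_le_mul_of_nonneg_right _ hApos.le
        rw [← h3]; exact h2
    _ = Real.exp (-(c * N) + Real.log A) := by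
        rw [Real.exp_add, Real.exp_log hApos]
    _ ≤ Real.exp (-1) := by
        apply Real.exp_le_exp.mpr
        linarith
    _ = 1 / Real.exp 1 := by
        rw [Real.exp_neg]
        exact (one_div _).symm

/-- Theorem 2 of the paper: for any positive weight function `f`,
with `m = min f`, `M = max f`, `ξ = M/m`, if
`θ = min_v (q_v f(v) - Σ_{w ∈ N_v} q_w (λ_w/(1+λ_w)) f(w)) > 0`, then the variation
distance decays geometrically and `T_mix ≤ ⌈(M/θ) log(nξe)⌉`. -/
theorem pgd_fast_mixing
    {V : Type*} [Fintype V] [DecidableEq V] [Nonempty V]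
    (G : SimpleGraph V) [DecidableRel G.Adj]
    (lam : V → ℝ) (hlam : ∀ v, 0 < lam v)
    (q : Finset V → ℝ)
    (hq0 : ∀ m, 0 ≤ q m)
    (hqsupp : ∀ m, ¬ IsInd G m → q m = 0)
    (hqsum : ∑ m : Finset V, q m = 1)
    (hqv : ∀ v, 0 < qVert q v)
    (f : V → ℝ) (hf : ∀ v, 0 < f v)
    (m M ξ θ : ℝ)
    (hm : m = univ.inf' univ_nonempty f)
    (hM : M = univ.sup' univ_nonempty f)
    (hξ : ξ = M / m)
    (hθ : θ = univ.inf' univ_nonempty (fun v =>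
      qVert q v * f v -
        ∑ w ∈ G.neighborFinset v, qVert q w * (lam w / (1 + lam w)) * f w))
    (hθpos : 0 < θ) :
    (∀ x ∈ univ.filter (fun s => IsInd G s), ∀ t : ℕ,
      tvDist (chainDist (pgdP G lam q) x t) (prodForm G lam) ≤
        min 1 ((1 - θ / M) ^ t * ((Fintype.card V : ℝ) * ξ))) ∧
    mixTime (pgdP G lam q) (prodForm G lam) (univ.filter (fun s => IsInd G s)) ≤
      ⌈(M / θ) * Real.log ((Fintype.card V : ℝ) * ξ * Real.exp 1)⌉₊ := by
  classical
  have v0 : V := Classical.arbitrary V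
  have hmle : ∀ v, m ≤ f v := fun v => hm ▸ Finset.inf'_le f (Finset.mem_univ v)
  have hMge : ∀ v, f v ≤ M := fun v => hM ▸ Finset.le_sup' f (Finset.mem_univ v)
  have hmpos : 0 < m := by
    obtain ⟨v1, _, hv1⟩ := Finset.exists_mem_eq_inf' univ_nonempty f
    rw [hm, hv1]
    exact hf v1
  have hMpos : 0 < M := lt_of_lt_of_le (hf v0) (hMge v0)
  have hmM : m ≤ M := le_trans (hmle v0) (hMge v0)
  have hθle : ∀ v, θ ≤ qVert q v * f v -
      ∑ w ∈ G.neighborFinset v, qVert q w * (lam w / (1 + lam w)) * f w :=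
    fun v => hθ ▸ Finset.inf'_le _ (Finset.mem_univ v)
  have hqva : ∀ v, 0 ≤ qVert q v := fun v => (hqv v).le
  have hqv1 : ∀ v, qVert q v ≤ 1 := by
    intro v
    rw [← hqsum, qVert]
    exact Finset.sum_le_sum_of_subset_of_nonneg (Finset.filter_subset _ _)
      (fun mm _ _ => hq0 mm)
  have hθM : θ ≤ M := by
    have h1 := hθle v0
    have h2 : 0 ≤ ∑ w ∈ G.neighborFinset v0, qVert q w * (lam w / (1 + lam w)) * f w := by
      apply Finset.sum_nonneg
      intro w _
      have hl := (hlam w).le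
      have hq := hqva w
      have hfw := (hf w).le
      have : 0 ≤ lam w / (1 + lam w) := by positivity
      positivity
    have h3 : qVert q v0 * f v0 ≤ f v0 := by
      nlinarith [hqv1 v0, (hf v0).le, hqva v0]
    linarith [hMge v0]
  have hξ1 : 1 ≤ ξ := by
    rw [hξ]
    exact (one_le_div hmpos).mpr hmM
  have hcard1 : (1 : ℝ) ≤ (Fintype.card V : ℝ) := by
    exact_mod_cast Nat.one_le_iff_ne_zero.mpr Fintype.card_ne_zero
  have hA1 : (1 : ℝ) ≤ (Fintype.card V : ℝ) * ξ := by nlinarith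
  have main : ∀ (x : Finset V) (t : ℕ),
      tvDist (chainDist (pgdP G lam q) x t) (prodForm G lam)
        ≤ (1 - θ / M) ^ t * ((Fintype.card V : ℝ) * ξ) := by
    intro x t
    have h := tv_bound G lam hlam q hq0 hqsupp hqsum f hf m M θ hmle hmpos hMge hMpos
      hθpos hθM hθle x t
    rw [hξ]
    exact h
  have tv1 : ∀ (x : Finset V) (t : ℕ),
      tvDist (chainDist (pgdP G lam q) x t) (prodForm G lam) ≤ 1 := by
    intro x t
    apply tvDist_le_one
    · exact chainDist_nonneg (pgdP G lam q) (pgdP_nonneg G lam hlam q hq0) x t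
    · exact prodForm_nonneg G lam hlam
    · exact chainDist_sum (pgdP G lam q) (pgdP_row_sum G lam hlam q hqsum) x t
    · exact prodForm_sum G lam hlam
  constructor
  · intro x _ t
    exact le_min (tv1 x t) (main x t)
  · apply Finset.sup_le
    intro x _
    apply Nat.sInf_le
    show tvDist (chainDist (pgdP G lam q) x _) (prodForm G lam) ≤ 1 / Real.exp 1
    set A : ℝ := (Fintype.card V : ℝ) * ξ with hAdef
    set N : ℕ := ⌈(M / θ) * Real.log (A * Real.exp 1)⌉₊ with hNdef
    have hc0 : 0 < θ / M := div_pos hθpos hMpos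
    have hc1 : θ / M ≤ 1 := (div_le_one hMpos).mpr hθM
    have hN : Real.log (A * Real.exp 1) / (θ / M) ≤ (N : ℝ) := by
      have heq : Real.log (A * Real.exp 1) / (θ / M)
          = (M / θ) * Real.log (A * Real.exp 1) := by
        rw [div_div_eq_mul_div]
        ring
      rw [heq]
      exact Nat.le_ceil _
    calc tvDist (chainDist (pgdP G lam q) x N) (prodForm G lam)
        ≤ (1 - θ / M) ^ N * A := main x N
      _ ≤ 1 / Real.exp 1 := final_num (θ / M) A N hc0 hc1 hA1 hN
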